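/- Let p ≥ 2 and n, m, l be positive integers, and let D : {1, …, m(p−1)} → 𝒫({1, …, n(p−1)}) assign to each of m(p−1) output coordinates a set of at most l input coordinates. Group the n(p−1) input coordinates into n consecutive blocks of size p−1 and the m(p−1) output coordinates into m consecutive blocks of size p−1; say output block J touches input block i if some output coordinate in block J has an input coordinate of block i in its dependency set. Then there exists a set S of input blocks with |S| ≥ n² / ( n + m·(p−1)⁴·l² ) such that every output block touches at most one block of S. -/
import Mathlib

lemma arith_aux (a e k s E δ : ℕ) (hk : k = δ + 1) (hs : a^2 ≤ s*(a+e))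
    (hE : e + k*δ ≤ E) : (a+k)^2 ≤ (s+1)*(a+k+E) := by
  subst hk
  rcases Nat.eq_zero_or_pos (a + e) with h0 | hpos
  · have ha : a = 0 := by omega
    subst ha; nlinarith
  · -- reduce to 2*a*k ≤ s*k^2 + a + e then multiply out
    zify at *
    nlinarith [sq_nonneg ((a:ℤ)*(δ+1) - (a+e)), mul_le_mul_of_nonneg_left hs (by positivity : (0:ℤ) ≤ ((δ:ℤ)+1)^2), sq_nonneg ((a:ℤ)+e), mul_pos (by exact_mod_cast hpos : (0:ℤ) < a+e) (by positivity : (0:ℤ) < ((δ:ℤ)+1)^2)]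

lemma turan_ind {α : Type*} [DecidableEq α] (R : α → α → Prop) [DecidableRel R]
    (hsym : ∀ a b, R a b → R b a) (V : Finset α) :
    ∃ S ⊆ V, (∀ i ∈ S, ∀ j ∈ S, i ≠ j → ¬ R i j) ∧
      V.card ^ 2 ≤ S.card * (V.card + ∑ u ∈ V, (V.filter fun w => w ≠ u ∧ R u w).card) := by
  induction V using Finset.strongInduction with
  | _ V ih =>
  rcases V.eq_empty_or_nonempty with rfl | hne
  · exact ⟨∅, by simp⟩
  · obtain ⟨v, hv, hmin⟩ := V.exists_min_image
      (fun u => (V.filter fun w => w ≠ u ∧ R u w).card) hne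
    set deg : α → ℕ := fun u => (V.filter fun w => w ≠ u ∧ R u w).card with hdeg
    set N : Finset α := insert v (V.filter fun w => w ≠ v ∧ R v w) with hN
    have hNV : N ⊆ V := by
      rw [hN]; exact Finset.insert_subset hv (Finset.filter_subset _ _)
    have hNcard : N.card = deg v + 1 := by
      rw [hN, Finset.card_insert_of_notMem (by simp)]
    set V' : Finset α := V \ N with hV'
    have hvN : v ∈ N := by simp [hN]
    have hV'V : V' ⊂ V := by
      refine Finset.ssubset_iff_of_subset (Finset.sdiff_subset) |>.mpr ⟨v, hv, by simp [hV', hvN]⟩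
    obtain ⟨S', hS'sub, hS'ind, hS'card⟩ := ih V' hV'V
    have hvS' : v ∉ S' := fun h =>
      (Finset.mem_sdiff.mp (by rw [← hV']; exact hS'sub h)).2 hvN
    refine ⟨insert v S', ?_, ?_, ?_⟩
    · exact Finset.insert_subset hv (hS'sub.trans Finset.sdiff_subset)
    · intro i hi j hj hij
      have key : ∀ w ∈ S', ¬ R v w := by
        intro w hw hR
        have hwV' := hS'sub hw
        rw [hV', Finset.mem_sdiff] at hwV'
        apply hwV'.2
        rw [hN]
        by_cases hwv : w = v
        · simp [hwv]
        · exact Finset.mem_insert_of_mem (by simp [hwV'.1, hwv, hR])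
      rcases Finset.mem_insert.mp hi with rfl | hi' <;>
        rcases Finset.mem_insert.mp hj with rfl | hj'
      · exact absurd rfl hij
      · exact key j hj'
      · exact fun hR => key i hi' (hsym _ _ hR)
      · exact hS'ind i hi' j hj' hij
    · -- counting
      have hcard : (insert v S').card = S'.card + 1 := Finset.card_insert_of_notMem hvS'
      have hVcard : V.card = V'.card + (deg v + 1) := by
        rw [hV', Finset.card_sdiff_of_subset hNV, hNcard]
        have := Finset.card_le_card hNV
        omega
      -- edge counts
      set E' : ℕ := ∑ u ∈ V', (V'.filter fun w => w ≠ u ∧ R u w).card with hE'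
      have hmono : E' ≤ ∑ u ∈ V', deg u := by
        apply Finset.sum_le_sum
        intro u hu
        exact Finset.card_le_card (Finset.filter_subset_filter _ Finset.sdiff_subset)
      have hsplit : ∑ u ∈ V', deg u + ∑ u ∈ N, deg u = ∑ u ∈ V, deg u := by
        rw [hV']; exact Finset.sum_sdiff hNV
      have hNdeg : (deg v + 1) * deg v ≤ ∑ u ∈ N, deg u := by
        calc (deg v + 1) * deg v = ∑ _u ∈ N, deg v := by rw [Finset.sum_const, hNcard, smul_eq_mul]
        _ ≤ ∑ u ∈ N, deg u := Finset.sum_le_sum fun u hu => hmin u (hNV hu)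
      have hEtot : E' + (deg v + 1) * deg v ≤ ∑ u ∈ V, deg u := by omega
      rw [hcard, hVcard]
      exact arith_aux V'.card E' (deg v + 1) S'.card (∑ u ∈ V, deg u) (deg v) rfl hS'card hEtot

set_option maxHeartbeats 1000000

/-- Block-locality lemma: for any dependency structure `D` on `m(p-1)` output
coordinates, each depending on at most `l` of the `n(p-1)` input coordinates, where
inputs and outputs are grouped into consecutive blocks of size `p-1`, there is a set `S`
of input blocks with `|S| ≥ n²/(n + m(p-1)⁴l²)` such that every output block touches at
most one block of `S`. -/
theorem stmt_10 (p n m l : ℕ) (hp : 2 ≤ p) (hn : 0 < n) (hm : 0 < m) (hl : 0 < l)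
    (D : Fin (m * (p - 1)) → Finset (Fin (n * (p - 1))))
    (hD : ∀ j, (D j).card ≤ l) :
    ∃ S : Finset (Fin n),
      (n : ℝ) ^ 2 / ((n : ℝ) + (m : ℝ) * ((p : ℝ) - 1) ^ 4 * (l : ℝ) ^ 2) ≤ (S.card : ℝ) ∧
      ∀ J : Fin m, ∀ i₁ ∈ S, ∀ i₂ ∈ S,
        (∃ j : Fin (m * (p - 1)), (j : ℕ) / (p - 1) = (J : ℕ) ∧
            ∃ a ∈ D j, (a : ℕ) / (p - 1) = (i₁ : ℕ)) →
        (∃ j : Fin (m * (p - 1)), (j : ℕ) / (p - 1) = (J : ℕ) ∧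
            ∃ a ∈ D j, (a : ℕ) / (p - 1) = (i₂ : ℕ)) →
        i₁ = i₂ := by
  classical
  have hp1 : 0 < p - 1 := by omega
  set R : Fin n → Fin n → Prop := fun i₁ i₂ =>
    ∃ j₁ j₂ : Fin (m * (p - 1)), (j₁ : ℕ) / (p - 1) = (j₂ : ℕ) / (p - 1) ∧
      (∃ a ∈ D j₁, (a : ℕ) / (p - 1) = (i₁ : ℕ)) ∧
      (∃ b ∈ D j₂, (b : ℕ) / (p - 1) = (i₂ : ℕ)) with hR
  have hsym : ∀ a b, R a b → R b a := by
    rintro x y ⟨j₁, j₂, hb, h1, h2⟩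
    exact ⟨j₂, j₁, hb.symm, h2, h1⟩
  obtain ⟨S, -, hind, hcard⟩ := turan_ind R hsym (Finset.univ : Finset (Fin n))
  refine ⟨S, ?_, ?_⟩
  · -- cardinality bound
    set E : ℕ := ∑ u ∈ Finset.univ,
      ((Finset.univ : Finset (Fin n)).filter fun w => w ≠ u ∧ R u w).card with hEdef
    -- bound E
    set f : Fin (n * (p - 1)) → Fin n :=
      fun a => ⟨(a : ℕ) / (p - 1), (Nat.div_lt_iff_lt_mul hp1).mpr a.isLt⟩ with hf
    set Pairs : Finset (Fin (m * (p - 1)) × Fin (m * (p - 1))) :=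
      Finset.univ.filter (fun q => (q.1 : ℕ) / (p - 1) = (q.2 : ℕ) / (p - 1)) with hPdef
    set g : Fin (m * (p - 1)) × Fin (m * (p - 1)) → Finset (Fin n × Fin n) :=
      fun q => (D q.1 ×ˢ D q.2).image (fun ab => (f ab.1, f ab.2)) with hg
    have hE1 : E = (Finset.univ.biUnion (fun u : Fin n =>
        ({u} : Finset (Fin n)) ×ˢ (Finset.univ.filter fun w => w ≠ u ∧ R u w))).card := by
      rw [Finset.card_biUnion]
      · exact Finset.sum_congr rfl fun u _ => by
          rw [Finset.singleton_product, Finset.card_map]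
      · intro x _ y _ hxy
        refine Finset.disjoint_left.mpr fun q hq hq' => ?_
        simp only [Finset.mem_product, Finset.mem_singleton] at hq hq'
        exact hxy (hq.1 ▸ hq'.1 ▸ rfl)
    have hsub : (Finset.univ.biUnion (fun u : Fin n =>
        ({u} : Finset (Fin n)) ×ˢ (Finset.univ.filter fun w => w ≠ u ∧ R u w)))
        ⊆ Pairs.biUnion g := by
      intro q hq
      simp only [Finset.mem_biUnion, Finset.mem_product, Finset.mem_singleton,
        Finset.mem_filter, Finset.mem_univ, true_and] at hq
      obtain ⟨u, ⟨hq1, -, hRq⟩⟩ := hq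
      obtain ⟨j₁, j₂, hblk, ⟨a, ha, hai⟩, ⟨b, hb, hbi⟩⟩ := hRq
      rw [Finset.mem_biUnion]
      refine ⟨(j₁, j₂), by simp [hPdef, hblk], ?_⟩
      rw [hg, Finset.mem_image]
      refine ⟨(a, b), Finset.mem_product.mpr ⟨ha, hb⟩, ?_⟩
      have : f a = q.1 := Fin.ext (by simpa [hf, hq1] using hai)
      have h2 : f b = q.2 := Fin.ext (by simpa [hf] using hbi)
      simp [this, h2]
    have hPairs : Pairs.card ≤ (m * (p - 1)) * (p - 1) := by
      have hsub2 : Pairs ⊆ Finset.univ.biUnion (fun j₁ : Fin (m * (p - 1)) =>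
          ({j₁} : Finset _) ×ˢ (Finset.univ.filter fun j₂ : Fin (m * (p - 1)) =>
            (j₂ : ℕ) / (p - 1) = (j₁ : ℕ) / (p - 1))) := by
        intro q hq
        simp only [hPdef, Finset.mem_filter, Finset.mem_univ, true_and] at hq
        simp only [Finset.mem_biUnion, Finset.mem_product, Finset.mem_singleton,
          Finset.mem_filter, Finset.mem_univ, true_and]
        exact ⟨q.1, rfl, hq.symm⟩
      calc Pairs.card ≤ _ := Finset.card_le_card hsub2
        _ ≤ ∑ j₁ ∈ Finset.univ, (({j₁} : Finset (Fin (m * (p-1)))) ×ˢ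
            (Finset.univ.filter fun j₂ : Fin (m * (p - 1)) =>
            (j₂ : ℕ) / (p - 1) = (j₁ : ℕ) / (p - 1))).card := Finset.card_biUnion_le
        _ ≤ ∑ _j₁ ∈ (Finset.univ : Finset (Fin (m * (p-1)))), (p - 1) := by
            refine Finset.sum_le_sum fun j₁ _ => ?_
            rw [Finset.singleton_product, Finset.card_map]
            refine le_trans (le_of_le_of_eq (Finset.card_le_card_of_injOn
              (fun j₂ => (j₂ : ℕ) % (p - 1))
              (fun j₂ _ => Finset.mem_range.mpr (Nat.mod_lt _ hp1)) ?_)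
              (Finset.card_range _)) le_rfl
            intro x hx y hy hxy
            simp only [Finset.mem_coe, Finset.mem_filter, Finset.mem_univ, true_and] at hx hy
            simp only at hxy
            refine Fin.ext ?_
            rw [← Nat.div_add_mod (x : ℕ) (p - 1), ← Nat.div_add_mod (y : ℕ) (p - 1),
              hx.trans hy.symm, hxy]
        _ = (m * (p - 1)) * (p - 1) := by
            rw [Finset.sum_const, Finset.card_univ, Fintype.card_fin, smul_eq_mul]
    have hEbound : E ≤ (m * (p - 1)) * (p - 1) * (l * l) := by
      calc E = _ := hE1
        _ ≤ (Pairs.biUnion g).card := Finset.card_le_card hsub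
        _ ≤ ∑ q ∈ Pairs, (g q).card := Finset.card_biUnion_le
        _ ≤ ∑ _q ∈ Pairs, (l * l) := by
            refine Finset.sum_le_sum fun q _ => ?_
            calc (g q).card ≤ (D q.1 ×ˢ D q.2).card := Finset.card_image_le
              _ = (D q.1).card * (D q.2).card := Finset.card_product _ _
              _ ≤ l * l := Nat.mul_le_mul (hD _) (hD _)
        _ = Pairs.card * (l * l) := by rw [Finset.sum_const, smul_eq_mul]
        _ ≤ (m * (p - 1)) * (p - 1) * (l * l) := Nat.mul_le_mul_right _ hPairs
    -- now real arithmetic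
    clear_value E
    have hcastp : ((p - 1 : ℕ) : ℝ) = (p : ℝ) - 1 := by
      rw [Nat.cast_sub (by omega), Nat.cast_one]
    have hpge : (1 : ℝ) ≤ (p : ℝ) - 1 := by
      rw [← hcastp]; exact_mod_cast hp1
    have hd0 : (0 : ℝ) < (n : ℝ) + (m : ℝ) * ((p : ℝ) - 1) ^ 4 * (l : ℝ) ^ 2 := by
      have h1 : (0 : ℝ) < (n : ℝ) := by exact_mod_cast hn
      have h2 : (0 : ℝ) ≤ (m : ℝ) * ((p : ℝ) - 1) ^ 4 * (l : ℝ) ^ 2 := by positivity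
      linarith
    rw [div_le_iff₀ hd0]
    have hcardR : (n : ℝ) ^ 2 ≤ (S.card : ℝ) * ((n : ℝ) + (E : ℝ)) := by
      have := hcard
      rw [Finset.card_univ, Fintype.card_fin] at this
      exact_mod_cast this
    have hER : (E : ℝ) ≤ (m : ℝ) * ((p : ℝ) - 1) ^ 4 * (l : ℝ) ^ 2 := by
      have h1 : (E : ℝ) ≤ (m : ℝ) * ((p : ℝ) - 1) * ((p : ℝ) - 1) * ((l : ℝ) * (l : ℝ)) := by
        have := hEbound
        have h2 : ((m * (p - 1) * (p - 1) * (l * l) : ℕ) : ℝ)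
            = (m : ℝ) * ((p : ℝ) - 1) * ((p : ℝ) - 1) * ((l : ℝ) * (l : ℝ)) := by
          push_cast [hcastp]; ring
        calc (E : ℝ) ≤ _ := by exact_mod_cast this
          _ = _ := h2
      have h3 : (m : ℝ) * ((p : ℝ) - 1) * ((p : ℝ) - 1) * ((l : ℝ) * (l : ℝ))
          ≤ (m : ℝ) * ((p : ℝ) - 1) ^ 4 * (l : ℝ) ^ 2 := by
        have hm0 : (0 : ℝ) ≤ (m : ℝ) := Nat.cast_nonneg m
        have hl0 : (0 : ℝ) ≤ (l : ℝ) := Nat.cast_nonneg l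
        have hx2 : (1:ℝ) ≤ ((p:ℝ)-1)^2 := by nlinarith [hpge]
        have hx : ((p:ℝ)-1)^2 ≤ ((p:ℝ)-1)^4 := by
          nlinarith [hx2, sq_nonneg ((p:ℝ)-1), sq_nonneg (((p:ℝ)-1)^2)]
        have h4 : (0:ℝ) ≤ (m:ℝ)*((l:ℝ)*(l:ℝ)) := by positivity
        nlinarith [mul_le_mul_of_nonneg_left hx h4]
      linarith
    calc (n : ℝ) ^ 2 ≤ (S.card : ℝ) * ((n : ℝ) + (E : ℝ)) := hcardR
      _ ≤ (S.card : ℝ) * ((n : ℝ) + (m : ℝ) * ((p : ℝ) - 1) ^ 4 * (l : ℝ) ^ 2) := by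
          have : (0 : ℝ) ≤ (S.card : ℝ) := Nat.cast_nonneg _
          nlinarith
  · -- independence conclusion
    intro J i₁ hi₁ i₂ hi₂ h₁ h₂
    by_contra hne
    obtain ⟨j₁, hj₁, a, ha, hai⟩ := h₁
    obtain ⟨j₂, hj₂, b, hb, hbi⟩ := h₂
    exact hind i₁ hi₁ i₂ hi₂ hne ⟨j₁, j₂, by rw [hj₁, hj₂], ⟨a, ha, hai⟩, ⟨b, hb, hbi⟩⟩
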